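/- arXiv:1503.06155 — 2 statements merged into one kernel-verified Lean document; each statement's English description precedes it below -/
import Mathlib

section
/- Let r > 1 and δ > 0 be real numbers, and define κ(r, δ) = (r(1+δ))^{1/r} - 1 and δ(r) = r^{1/(r-1)} - 1. Then κ(r, δ) < δ if and only if δ > δ(r). Consequently, the interval (κ(r, δ), δ] is nonempty if and only if δ > δ(r). -/
theorem stmt_5 (r δ : ℝ) (hr : r > 1) (hδ : δ > 0) :
    ((r * (1 + δ)) ^ (1 / r) - 1 < δ ↔ δ > r ^ (1 / (r - 1)) - 1) ∧
    ((Set.Ioc ((r * (1 + δ)) ^ (1 / r) - 1) δ).Nonempty ↔ δ > r ^ (1 / (r - 1)) - 1) := by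
  have hr0 : (0:ℝ) < r := by linarith
  have h1δ : (0:ℝ) < 1 + δ := by linarith
  have hr1 : (0:ℝ) < r - 1 := by linarith
  have key : (r * (1 + δ)) ^ (1 / r) - 1 < δ ↔ δ > r ^ (1 / (r - 1)) - 1 := by
    rw [sub_lt_iff_lt_add, one_div, one_div, gt_iff_lt, sub_lt_iff_lt_add,
      Real.rpow_inv_lt_iff_of_pos (by positivity) (by linarith) hr0,
      Real.rpow_inv_lt_iff_of_pos (by linarith) (by linarith) hr1]
    have : (δ + 1) ^ r = (δ + 1) ^ (r - 1) * (δ + 1) := by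
      rw [← Real.rpow_add_one (by positivity)]; ring_nf
    rw [this, show r * (1 + δ) = r * (δ + 1) by ring, mul_lt_mul_iff_left₀ (by linarith : (0:ℝ) < δ + 1)]

  refine ⟨key, ?_⟩
  rw [Set.nonempty_Ioc]
  exact key
end

section
/- Let r > 1 and δ > 0 be reals and suppose (1/r)^{1/r} (1 + t) (1 + δ)^{-1/r} > 1 for some t ∈ (0, δ]. Then necessarily δ > r^{1/(r-1)} - 1. Conversely, if δ > r^{1/(r-1)} - 1, then there exists t ∈ (0, δ] with (1/r)^{1/r}(1+t)(1+δ)^{-1/r} > 1, namely any t ∈ ((r(1+δ))^{1/r} - 1, δ]. -/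
theorem stmt_18 (r δ : ℝ) (hr : r > 1) (hδ : δ > 0) :
    ((∃ t ∈ Set.Ioc (0 : ℝ) δ, (1 / r) ^ (1 / r) * (1 + t) * (1 + δ) ^ (-(1 / r)) > 1) →
        δ > r ^ (1 / (r - 1)) - 1) ∧
    (δ > r ^ (1 / (r - 1)) - 1 →
      (∀ t ∈ Set.Ioc ((r * (1 + δ)) ^ (1 / r) - 1) δ,
          (1 / r) ^ (1 / r) * (1 + t) * (1 + δ) ^ (-(1 / r)) > 1) ∧
      ∃ t ∈ Set.Ioc (0 : ℝ) δ, (1 / r) ^ (1 / r) * (1 + t) * (1 + δ) ^ (-(1 / r)) > 1) := by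
  have hrpos : (0:ℝ) < r := lt_trans one_pos hr
  have hr1 : (0:ℝ) < r - 1 := sub_pos.mpr hr
  have h1δ : (0:ℝ) < 1 + δ := by linarith
  have hrδ : (0:ℝ) < r * (1 + δ) := by positivity
  set A : ℝ := (r * (1 + δ)) ^ (1 / r) with hA
  have hApos : 0 < A := Real.rpow_pos_of_pos hrδ _
  have hexpr : ∀ t : ℝ, (1 / r) ^ (1 / r) * (1 + t) * (1 + δ) ^ (-(1 / r)) = (1 + t) / A := by
    intro t
    have h1 : (r:ℝ) ^ (1/r) ≠ 0 := ne_of_gt (Real.rpow_pos_of_pos hrpos _)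
    have h2 : ((1+δ):ℝ) ^ (1/r) ≠ 0 := ne_of_gt (Real.rpow_pos_of_pos h1δ _)
    rw [hA, one_div r, Real.inv_rpow hrpos.le, Real.rpow_neg h1δ.le,
        Real.mul_rpow hrpos.le h1δ.le]
    field_simp
  have hiff : ∀ t : ℝ, ((1 / r) ^ (1 / r) * (1 + t) * (1 + δ) ^ (-(1 / r)) > 1 ↔ 1 + t > A) := by
    intro t
    rw [hexpr t, gt_iff_lt, lt_div_iff₀ hApos, one_mul, gt_iff_lt]
  have hsplit : (1+δ) ^ r = (1+δ) ^ (r-1) * (1+δ) := by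
    have := Real.rpow_add h1δ (r-1) 1
    simpa [Real.rpow_one] using this
  have key2 : (1+δ) ^ (r-1) > r ↔ (1+δ) ^ r > r * (1+δ) := by
    rw [hsplit, gt_iff_lt, gt_iff_lt]
    exact (mul_lt_mul_iff_of_pos_right h1δ).symm
  have key3 : 1 + δ > r ^ (1/(r-1)) ↔ (1+δ) ^ (r-1) > r := by
    constructor
    · intro h
      have h' := Real.rpow_lt_rpow (Real.rpow_nonneg hrpos.le _) h hr1
      rwa [← Real.rpow_mul hrpos.le, one_div, inv_mul_cancel₀ (ne_of_gt hr1),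
        Real.rpow_one] at h'
    · intro h
      have h' := Real.rpow_lt_rpow hrpos.le h (by positivity : (0:ℝ) < 1/(r-1))
      rwa [← Real.rpow_mul h1δ.le, mul_one_div, div_self (ne_of_gt hr1),
        Real.rpow_one] at h'
  have key1 : (1+δ) ^ r > r * (1+δ) ↔ 1 + δ > A := by
    constructor
    · intro h
      have h' := Real.rpow_lt_rpow hrδ.le h (by positivity : (0:ℝ) < 1/r)
      rwa [← Real.rpow_mul h1δ.le, mul_one_div, div_self (ne_of_gt hrpos),
        Real.rpow_one] at h'
    · intro h
      have h' := Real.rpow_lt_rpow hApos.le h hrpos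
      rwa [hA, ← Real.rpow_mul hrδ.le, one_div, inv_mul_cancel₀ (ne_of_gt hrpos),
        Real.rpow_one] at h'
  constructor
  · rintro ⟨t, ⟨ht0, htδ⟩, hineq⟩
    have h1 : 1 + t > A := (hiff t).mp hineq
    have h2 : 1 + δ > A := by linarith
    have h3 : 1 + δ > r ^ (1/(r-1)) := key3.mpr (key2.mpr (key1.mpr h2))
    linarith
  · intro h
    have h2 : 1 + δ > A := key1.mp (key2.mp (key3.mp (by linarith)))
    have hall : ∀ t ∈ Set.Ioc (A - 1) δ,
        (1 / r) ^ (1 / r) * (1 + t) * (1 + δ) ^ (-(1 / r)) > 1 := by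
      rintro t ⟨ht1, ht2⟩
      exact (hiff t).mpr (by linarith)
    exact ⟨hall, δ, ⟨hδ, le_refl δ⟩, hall δ ⟨by linarith, le_refl δ⟩⟩
end
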